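/- Let S_1, ..., S_{n+1} be exchangeable random variables with almost surely distinct values, and let q̂ be the ⌈(1-α)(n+1)⌉-th smallest value among S_1, ..., S_n (with q̂ = +∞ if ⌈(1-α)(n+1)⌉ > n). Then P(S_{n+1} ≤ q̂) ≥ 1 - α. -/

import Mathlib

open MeasureTheory Finset

/-! ### Auxiliary lemmas -/

theorem countP_ofFn' (n : ℕ) (g : Fin n → ℝ) (p : ℝ → Bool) :
    (List.ofFn g).countP p = (Finset.univ.filter fun i => p (g i) = true).card := by
  induction n with
  | zero => simp
  | succ m ih =>
    rw [List.ofFn_succ, List.countP_cons, Finset.card_filter, Fin.sum_univ_succ,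
      ← Finset.card_filter, ih]
    omega

/-- If at most `m` elements of `l` are `≤ x`, then `x` is at most the
`(m+1)`-th smallest element of `l`. -/
theorem le_sorted_getD (l : List ℝ) (x : ℝ) (m : ℕ) (hm : m < l.length)
    (hc : l.countP (fun a => a ≤ x) ≤ m) :
    x ≤ (l.insertionSort (· ≤ ·)).getD m 0 := by
  set l' := l.insertionSort (· ≤ ·) with hl'
  have hperm : l'.Perm l := List.perm_insertionSort _ l
  have hlen : l'.length = l.length := hperm.length_eq
  have hm' : m < l'.length := by omega
  have hsort : l'.Pairwise (· ≤ ·) := List.pairwise_insertionSort _ l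
  rw [List.getD_eq_getElem l' 0 hm']
  by_contra h
  push_neg at h
  have htake : ((l'.take (m+1)).countP fun a => a ≤ x) = (l'.take (m+1)).length := by
    rw [List.countP_eq_length]
    intro a ha
    rw [List.mem_iff_getElem] at ha
    obtain ⟨j, hj, rfl⟩ := ha
    rw [List.getElem_take]
    have hj' : j < m + 1 := by
      have := List.length_take (i := m+1) (l := l'); omega
    have : l'[j] ≤ l'[m] := by
      have := List.Pairwise.rel_get_of_le hsort (a := ⟨j, by omega⟩) (b := ⟨m, hm'⟩)
        (by simp [Fin.le_def]; omega)
      simpa using this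
    simp only [decide_eq_true_eq]
    linarith
  have hcount' : l'.countP (fun a => a ≤ x) = l.countP (fun a => a ≤ x) :=
    hperm.countP_eq _
  have hsplit : l'.countP (fun a => a ≤ x) =
      ((l'.take (m+1)).countP fun a => a ≤ x) + ((l'.drop (m+1)).countP fun a => a ≤ x) := by
    rw [← List.countP_append, List.take_append_drop]
  have hlt : (l'.take (m+1)).length = m + 1 := by
    rw [List.length_take]; omega
  omega

/-- The rank of index `j` in the vector `f`: the number of indices `i` with `f i ≤ f j`. -/
noncomputable def crank {m : ℕ} (f : Fin m → ℝ) (j : Fin m) : ℕ :=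
  (Finset.univ.filter fun i => f i ≤ f j).card

theorem crank_pos {m : ℕ} (f : Fin m → ℝ) (j : Fin m) : 1 ≤ crank f j := by
  have : j ∈ Finset.univ.filter fun i => f i ≤ f j := by simp
  have := Finset.card_pos.mpr ⟨j, this⟩
  simpa [crank] using this

theorem crank_le {m : ℕ} (f : Fin m → ℝ) (j : Fin m) : crank f j ≤ m := by
  rw [crank]
  exact (Finset.card_filter_le _ _).trans (by simp)

theorem crank_lt_of_lt {m : ℕ} (f : Fin m → ℝ) {i j : Fin m} (h : f i < f j) :
    crank f i < crank f j := by
  apply Finset.card_lt_card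
  constructor
  · intro a ha
    simp only [Finset.mem_filter, Finset.mem_univ, true_and] at ha ⊢
    linarith
  · intro hsub
    have := hsub (by simp : j ∈ Finset.univ.filter fun i' => f i' ≤ f j)
    simp only [Finset.mem_filter, Finset.mem_univ, true_and] at this
    linarith

theorem crank_injective {m : ℕ} {f : Fin m → ℝ} (hf : Function.Injective f) :
    Function.Injective (crank f) := by
  intro i j hij
  by_contra hne
  rcases lt_or_gt_of_ne (fun h : f i = f j => hne (hf h)) with h | h
  · exact absurd hij (Nat.ne_of_lt (crank_lt_of_lt f h))
  · exact absurd hij.symm (Nat.ne_of_lt (crank_lt_of_lt f h))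

theorem card_crank_le {m : ℕ} {f : Fin m → ℝ} (hf : Function.Injective f)
    {k : ℕ} (hk : k ≤ m) :
    (Finset.univ.filter fun j => crank f j ≤ k).card = k := by
  have himg : Finset.image (crank f) Finset.univ = Finset.Icc 1 m := by
    apply Finset.eq_of_subset_of_card_le
    · intro r hr
      simp only [Finset.mem_image] at hr
      obtain ⟨j, _, rfl⟩ := hr
      simp [Finset.mem_Icc, crank_pos, crank_le]
    · rw [Finset.card_image_of_injective _ (crank_injective hf)]
      simp [Nat.card_Icc]
  have : Finset.image (crank f) (Finset.univ.filter fun j => crank f j ≤ k)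
      = (Finset.image (crank f) Finset.univ).filter (· ≤ k) := by
    ext r
    constructor
    · intro hr
      obtain ⟨j, hj, rfl⟩ := Finset.mem_image.mp hr
      exact Finset.mem_filter.mpr ⟨Finset.mem_image_of_mem _ (Finset.mem_univ j),
        (Finset.mem_filter.mp hj).2⟩
    · intro hr
      obtain ⟨hmem, hk'⟩ := Finset.mem_filter.mp hr
      obtain ⟨j, _, rfl⟩ := Finset.mem_image.mp hmem
      exact Finset.mem_image_of_mem _ (Finset.mem_filter.mpr ⟨Finset.mem_univ j, hk'⟩)
  calc (Finset.univ.filter fun j => crank f j ≤ k).card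
      = (Finset.image (crank f) (Finset.univ.filter fun j => crank f j ≤ k)).card := by
        rw [Finset.card_image_of_injective _ (crank_injective hf)]
    _ = ((Finset.Icc 1 m).filter (· ≤ k)).card := by rw [this, himg]
    _ = k := by
        have : (Finset.Icc 1 m).filter (· ≤ k) = Finset.Icc 1 k := by
          ext r; simp only [Finset.mem_filter, Finset.mem_Icc]; omega
        rw [this, Nat.card_Icc]; omega

theorem crank_last {n : ℕ} (f : Fin (n + 1) → ℝ) :
    crank f (Fin.last n)
      = (Finset.univ.filter fun i : Fin n => f i.castSucc ≤ f (Fin.last n)).card + 1 := by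
  rw [crank, Finset.card_filter, Fin.sum_univ_castSucc, ← Finset.card_filter]
  simp

theorem crank_comp_perm {m : ℕ} (f : Fin m → ℝ) (σ : Equiv.Perm (Fin m)) (j : Fin m) :
    crank (f ∘ σ) j = crank f (σ j) := by
  unfold crank
  rw [← Finset.card_image_of_injective
      (Finset.univ.filter fun i => (f ∘ σ) i ≤ (f ∘ σ) j) σ.injective]
  congr 1
  ext b
  simp only [Finset.mem_image, Finset.mem_filter, Finset.mem_univ, true_and,
    Function.comp_apply]
  constructor
  · rintro ⟨a, ha, rfl⟩; exact ha
  · intro hb; exact ⟨σ.symm b, by simpa using hb, by simp⟩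

theorem measurable_crank {m : ℕ} (j : Fin m) :
    Measurable fun f : Fin m → ℝ => crank f j := by
  have : (fun f : Fin m → ℝ => crank f j)
      = fun f => ∑ i : Fin m, if f i ≤ f j then 1 else 0 := by
    funext f; rw [crank, Finset.card_filter]
  rw [this]
  apply Finset.measurable_sum
  intro i _
  exact Measurable.ite (measurableSet_le (measurable_pi_apply i) (measurable_pi_apply j))
    measurable_const measurable_const

/-! ### Main theorem -/

/-- Split conformal marginal coverage: if `S_1, ..., S, S_{n+1}` are exchangeable
with a.s. distinct values and `q̂` is the `⌈(1-α)(n+1)⌉`-th smallest of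
`S_1, ..., S_n` (taken as `+∞`, i.e. the event is all of `Ω`, if the index
exceeds `n`), then `P(S_{n+1} ≤ q̂) ≥ 1 - α`. -/
theorem split_conformal_marginal_coverage
    {Ω : Type*} [MeasurableSpace Ω] (μ : Measure Ω) [IsProbabilityMeasure μ]
    (n : ℕ) (S : Fin (n + 1) → Ω → ℝ)
    (hmeas : ∀ i, Measurable (S i))
    (hexch : ∀ σ : Equiv.Perm (Fin (n + 1)),
      Measure.map (fun ω => fun i => S (σ i) ω) μ
        = Measure.map (fun ω => fun i => S i ω) μ)
    (hdist : ∀ᵐ ω ∂μ, Function.Injective fun i => S i ω)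
    (α : ℝ) (hα : α ∈ Set.Ioo (0 : ℝ) 1) :
    1 - α ≤
      (μ {ω | if ⌈(1 - α) * (n + 1)⌉₊ ≤ n then
          S (Fin.last n) ω ≤
            (((List.ofFn fun i : Fin n => S i.castSucc ω).insertionSort (· ≤ ·)).getD
              (⌈(1 - α) * (n + 1)⌉₊ - 1) 0)
        else True}).toReal := by
  obtain ⟨hα0, hα1⟩ := hα
  set k := ⌈(1 - α) * (n + 1)⌉₊ with hkdef
  by_cases hkn : k ≤ n
  case neg =>
    have huniv : {ω : Ω | if k ≤ n then
        S (Fin.last n) ω ≤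
          (((List.ofFn fun i : Fin n => S i.castSucc ω).insertionSort (· ≤ ·)).getD
            (k - 1) 0) else True} = Set.univ := by
      ext ω; simp [if_neg hkn]
    rw [huniv, measure_univ]
    simp only [ENNReal.toReal_one]
    linarith
  case pos =>
    have hk1 : 1 ≤ k := Nat.ceil_pos.mpr (mul_pos (by linarith) (by positivity))
    have hkn1 : k ≤ n + 1 := by omega
    set T : Ω → (Fin (n + 1) → ℝ) := fun ω i => S i ω with hTdef
    have hTmeas : Measurable T := measurable_pi_lambda _ hmeas
    have hAmeas : ∀ j : Fin (n + 1),
        MeasurableSet {f : Fin (n + 1) → ℝ | crank f j ≤ k} := fun j =>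
      measurable_crank j measurableSet_Iic
    set E : Fin (n + 1) → Set Ω := fun j => T ⁻¹' {f | crank f j ≤ k} with hEdef
    have hEmeas : ∀ j, MeasurableSet (E j) := fun j => hTmeas (hAmeas j)
    -- equal probabilities by exchangeability
    have hEeq : ∀ j, μ (E j) = μ (E (Fin.last n)) := by
      intro j
      set σ : Equiv.Perm (Fin (n + 1)) := Equiv.swap j (Fin.last n) with hσdef
      have hσ := hexch σ
      have hpre : Measurable (fun f : Fin (n + 1) → ℝ => fun i => f (σ i)) :=
        measurable_pi_lambda _ fun i => measurable_pi_apply (σ i)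
      rw [show (fun ω => fun i => S (σ i) ω)
            = (fun f : Fin (n + 1) → ℝ => fun i => f (σ i)) ∘ T from rfl,
        ← Measure.map_map hpre hTmeas] at hσ
      have hpreim : (fun f : Fin (n + 1) → ℝ => fun i => f (σ i)) ⁻¹'
          {f | crank f (Fin.last n) ≤ k} = {f | crank f j ≤ k} := by
        ext f
        simp only [Set.mem_preimage, Set.mem_setOf_eq]
        rw [show (fun i => f (σ i)) = f ∘ σ from rfl, crank_comp_perm,
          Equiv.swap_apply_right]
      symm
      calc μ (E (Fin.last n))
          = Measure.map T μ {f | crank f (Fin.last n) ≤ k} :=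
            (Measure.map_apply hTmeas (hAmeas _)).symm
        _ = Measure.map (fun f : Fin (n + 1) → ℝ => fun i => f (σ i))
              (Measure.map T μ) {f | crank f (Fin.last n) ≤ k} := by rw [hσ]
        _ = Measure.map T μ ((fun f : Fin (n + 1) → ℝ => fun i => f (σ i)) ⁻¹'
              {f | crank f (Fin.last n) ≤ k}) :=
            Measure.map_apply hpre (hAmeas (Fin.last n))
        _ = Measure.map T μ {f | crank f j ≤ k} := by rw [hpreim]
        _ = μ (E j) := Measure.map_apply hTmeas (hAmeas j)
    -- the sum of the probabilities is k
    have hsum : ∑ j : Fin (n + 1), μ (E j) = (k : ENNReal) := by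
      have h1 : ∀ j : Fin (n + 1),
          μ (E j) = ∫⁻ ω, (E j).indicator (fun _ => (1 : ENNReal)) ω ∂μ := fun j =>
        (lintegral_indicator_one (hEmeas j)).symm
      have h1' := lintegral_finset_sum (μ := μ) Finset.univ
        (f := fun j : Fin (n + 1) => (E j).indicator fun _ => (1 : ENNReal))
        (fun j _ => measurable_const.indicator (hEmeas j))
      rw [Finset.sum_congr rfl fun j _ => h1 j, ← h1']
      have hpt : ∀ᵐ ω ∂μ, ∑ j : Fin (n + 1),
          (E j).indicator (fun _ => (1 : ENNReal)) ω = (k : ENNReal) := by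
        filter_upwards [hdist] with ω hω
        have h2 : ∀ j : Fin (n + 1), (E j).indicator (fun _ => (1 : ENNReal)) ω
            = if crank (T ω) j ≤ k then 1 else 0 := fun j => by
          simp [Set.indicator_apply, hEdef, Set.mem_preimage, Set.mem_setOf_eq]
        rw [Finset.sum_congr rfl fun j _ => h2 j, Finset.sum_boole]
        norm_cast
        exact card_crank_le hω hkn1
      rw [lintegral_congr_ae hpt, lintegral_const, measure_univ, mul_one]
    have hlast : ((n : ENNReal) + 1) * μ (E (Fin.last n)) = (k : ENNReal) := by
      rw [← hsum, Finset.sum_congr rfl fun j _ => hEeq j, Finset.sum_const,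
        Finset.card_univ, Fintype.card_fin, nsmul_eq_mul]
      push_cast
      ring
    -- lower bound for the rank event
    have hge : ENNReal.ofReal (1 - α) ≤ μ (E (Fin.last n)) := by
      rw [← ENNReal.mul_le_mul_iff_right (a := (n : ENNReal) + 1) (by simp)
        (by simp [ENNReal.add_ne_top]), hlast]
      have : ((n : ENNReal) + 1) * ENNReal.ofReal (1 - α)
          = ENNReal.ofReal (((n : ℝ) + 1) * (1 - α)) := by
        rw [ENNReal.ofReal_mul (by positivity)]
        congr 1
        rw [ENNReal.ofReal_add (by positivity) zero_le_one, ENNReal.ofReal_natCast,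
          ENNReal.ofReal_one]
      rw [this, show (k : ENNReal) = ENNReal.ofReal (k : ℝ) by
        rw [ENNReal.ofReal_natCast]]
      apply ENNReal.ofReal_le_ofReal
      have := Nat.le_ceil ((1 - α) * (n + 1))
      rw [← hkdef] at this
      nlinarith
    -- the distinctness set
    set D : Set Ω := {ω | Function.Injective fun i => S i ω} with hDdef
    have hDnull : μ Dᶜ = 0 := by
      rw [show Dᶜ = {ω : Ω | ¬ Function.Injective fun i => S i ω} from Set.compl_setOf _]
      exact ae_iff.mp hdist
    -- inclusion of the rank event into the coverage event
    have hincl : E (Fin.last n) ∩ D ⊆ {ω : Ω | if k ≤ n then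
        S (Fin.last n) ω ≤
          (((List.ofFn fun i : Fin n => S i.castSucc ω).insertionSort (· ≤ ·)).getD
            (k - 1) 0) else True} := by
      rintro ω ⟨hωE, hωD⟩
      simp only [Set.mem_setOf_eq, if_pos hkn]
      have hrank : crank (T ω) (Fin.last n) ≤ k := hωE
      rw [crank_last] at hrank
      apply le_sorted_getD _ _ (k - 1) (by simp [List.length_ofFn]; omega)
      rw [countP_ofFn']
      have : (Finset.univ.filter fun i : Fin n =>
            (decide (S i.castSucc ω ≤ S (Fin.last n) ω)) = true)
          = Finset.univ.filter fun i : Fin n =>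
            (T ω) i.castSucc ≤ (T ω) (Fin.last n) := by
        apply Finset.filter_congr
        intro i _
        simp [hTdef]
      rw [this]
      omega
    -- conclude
    have hmono : ENNReal.ofReal (1 - α) ≤ μ {ω : Ω | if k ≤ n then
        S (Fin.last n) ω ≤
          (((List.ofFn fun i : Fin n => S i.castSucc ω).insertionSort (· ≤ ·)).getD
            (k - 1) 0) else True} := by
      refine hge.trans ?_
      rw [← measure_inter_conull hDnull]
      exact measure_mono hincl
    have := ENNReal.toReal_mono (measure_ne_top μ _) hmono
    rwa [ENNReal.toReal_ofReal (by linarith)] at this
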